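/- Let x be the output of Algorithm FractionalKnapsack with sample size t ∈ {1,…,n−1}, where the permutation π is chosen uniformly at random among all permutations of [n]. Then E[v(x)] ≥ (t/n) · Σ_{ℓ=t+1}^n 1/(ℓ−1) · v(x̃([n])) ≥ (t/n) · (ln n − ln t) · v(x̃([n])), where x̃([n]) is the fractional greedy solution of all n items and v(x) = Σ_{j=1}^n v_j x_j. In particular, for t = ⌊n/e⌋ (and n ≥ 3 so that t ≥ 1), E[v(x)] ≥ (⌊n/e⌋/n) · (ln n − ln⌊n/e⌋) · v(x̃([n])). -/

import Mathlib

/-- The fractional greedy solution of the sub-instance on item set `Q`: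
since the densities are strictly decreasing in the index, the items of `Q` are
packed greedily in increasing index order (= decreasing density order) until the
capacity `C` is exhausted; the first item that does not fully fit is packed
fractionally, all later items of `Q` get fraction `0`, and items outside `Q` get `0`. -/
noncomputable def greedySol (n : ℕ) (C : ℝ) (s : Fin n → ℝ) (Q : Finset (Fin n)) (j : Fin n) : ℝ :=
  if j ∈ Q then
    (min C (∑ k ∈ Q.filter (fun k => k ≤ j), s k)
      - min C (∑ k ∈ Q.filter (fun k => k < j), s k)) / s j
  else 0

/-- `Qset π ℓ` is the set `Q_ℓ` of items revealed in the first `ℓ` rounds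
(rounds are indexed `0,…,n−1`, so round `ℓ₀ : Fin n` is round `ℓ₀+1` in 1-based counting). -/
def Qset (n : ℕ) (π : Equiv.Perm (Fin n)) (ℓ : ℕ) : Finset (Fin n) :=
  (Finset.univ.filter (fun k : Fin n => (k : ℕ) < ℓ)).image π

/-- The output of Algorithm `FractionalKnapsack` with sample size `t`:
`x_{π(ℓ)} = 0` for the sample rounds `ℓ ≤ t` (0-based: rounds `< t`) and, for a later
round `ℓ`, `x_{π(ℓ)} = x̃_{π(ℓ)}(Q_ℓ) − (1/s_{π(ℓ)}) Σ_{k=t+1}^{ℓ−1} s_{π(k)} (x̃_{π(k)}(Q_{ℓ−1}) − x̃_{π(k)}(Q_ℓ))`. -/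
noncomputable def algFK (n : ℕ) (C : ℝ) (s : Fin n → ℝ) (π : Equiv.Perm (Fin n)) (t : ℕ)
    (j : Fin n) : ℝ :=
  if (π.symm j : ℕ) < t then 0 else
    greedySol n C s (Qset n π ((π.symm j : ℕ) + 1)) j
      - (∑ k ∈ Finset.univ.filter
            (fun k : Fin n => t ≤ (k : ℕ) ∧ (k : ℕ) < (π.symm j : ℕ)),
          s (π k) * (greedySol n C s (Qset n π (π.symm j : ℕ)) (π k)
            - greedySol n C s (Qset n π ((π.symm j : ℕ) + 1)) (π k))) / s j

namespace FKaux
variable {n : ℕ} {C : ℝ} {s v : Fin n → ℝ}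

lemma filter_le_eq {Q : Finset (Fin n)} {j : Fin n} (hj : j ∈ Q) :
    Q.filter (fun k => k ≤ j) = insert j (Q.filter (fun k => k < j)) := by
  ext k
  simp only [Finset.mem_filter, Finset.mem_insert]
  constructor
  · rintro ⟨hk, hle⟩
    rcases eq_or_lt_of_le hle with h | h
    · exact Or.inl h
    · exact Or.inr ⟨hk, h⟩
  · rintro (rfl | ⟨hk, hlt⟩)
    · exact ⟨hj, le_refl _⟩
    · exact ⟨hk, hlt.le⟩

lemma sum_le_eq_add {Q : Finset (Fin n)} {j : Fin n} (hj : j ∈ Q) :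
    ∑ k ∈ Q.filter (fun k => k ≤ j), s k
      = s j + ∑ k ∈ Q.filter (fun k => k < j), s k := by
  rw [filter_le_eq hj, Finset.sum_insert (by simp)]

lemma greedy_nonneg (hC : 0 < C) (hs : ∀ j, 0 < s j) (Q : Finset (Fin n)) (j : Fin n) :
    0 ≤ greedySol n C s Q j := by
  unfold greedySol
  split_ifs with h
  · apply div_nonneg _ (hs j).le
    have : ∑ k ∈ Q.filter (fun k => k < j), s k ≤ ∑ k ∈ Q.filter (fun k => k ≤ j), s k := by
      rw [sum_le_eq_add h]; linarith [(hs j).le]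
    simp only [sub_nonneg]
    exact min_le_min le_rfl this
  · exact le_refl _

lemma greedy_le_one (hC : 0 < C) (hs : ∀ j, 0 < s j) (Q : Finset (Fin n)) (j : Fin n) :
    greedySol n C s Q j ≤ 1 := by
  unfold greedySol
  split_ifs with h
  · rw [div_le_one (hs j)]
    rw [sum_le_eq_add h]
    rcases le_total C (∑ k ∈ Q.filter (fun k => k < j), s k) with h1 | h1
    · rw [min_eq_left (by linarith [(hs j).le]), min_eq_left h1]; linarith [hs j]
    · rw [min_eq_right h1]
      have := min_le_left C (s j + ∑ k ∈ Q.filter (fun k => k < j), s k)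
      have := min_le_right C (s j + ∑ k ∈ Q.filter (fun k => k < j), s k)
      linarith
  · linarith

lemma sum_s_greedy (hC : 0 < C) (hs : ∀ j, 0 < s j) (Q : Finset (Fin n)) :
    ∑ k ∈ Q, s k * greedySol n C s Q k = min C (∑ k ∈ Q, s k) := by
  induction Q using Finset.induction_on_max with
  | empty => simp [min_eq_right hC.le]
  | insert a Q ha ih =>
    have haQ : a ∉ Q := fun h => absurd rfl (ha a h).ne
    rw [Finset.sum_insert haQ]
    have h1 : ∀ k ∈ Q, greedySol n C s (insert a Q) k = greedySol n C s Q k := by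
      intro k hk
      have hka : ¬ a ≤ k := not_le.mpr (ha k hk)
      unfold greedySol
      rw [if_pos (Finset.mem_insert_of_mem hk), if_pos hk,
        Finset.filter_insert, Finset.filter_insert, if_neg hka,
        if_neg (fun h : a < k => hka h.le)]
    have h2 : s a * greedySol n C s (insert a Q) a
        = min C (∑ k ∈ insert a Q, s k) - min C (∑ k ∈ Q, s k) := by
      unfold greedySol
      rw [if_pos (Finset.mem_insert_self a Q)]
      have e1 : (insert a Q).filter (fun k => k ≤ a) = insert a Q := by
        apply Finset.filter_true_of_mem
        intro x hx
        rcases Finset.mem_insert.mp hx with rfl | hx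
        · exact le_refl _
        · exact (ha x hx).le
      have e2 : (insert a Q).filter (fun k => k < a) = Q := by
        rw [Finset.filter_insert, if_neg (lt_irrefl a)]
        exact Finset.filter_true_of_mem (fun x hx => ha x hx)
      rw [e1, e2, mul_div_cancel₀ _ (hs a).ne']
    rw [Finset.sum_congr rfl (fun k hk => by rw [h1 k hk]), ih, h2]
    ring

lemma greedy_opt (hC : 0 < C) (hs : ∀ j, 0 < s j) (hv : ∀ j, 0 < v j)
    (hd : ∀ j k : Fin n, j < k → v k / s k < v j / s j)
    (Q : Finset (Fin n)) (y : Fin n → ℝ)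
    (hy0 : ∀ j ∈ Q, 0 ≤ y j) (hy1 : ∀ j ∈ Q, y j ≤ 1)
    (hyC : ∑ j ∈ Q, s j * y j ≤ C) :
    ∑ j ∈ Q, v j * y j ≤ ∑ j ∈ Q, v j * greedySol n C s Q j := by
  rcases le_or_gt (∑ k ∈ Q, s k) C with hcase | hcase
  · -- everything fits: greedy = 1 on Q
    have hone : ∀ j ∈ Q, greedySol n C s Q j = 1 := by
      intro j hj
      have hsub : ∀ (p : Fin n → Prop) [DecidablePred p],
          ∑ k ∈ Q.filter p, s k ≤ ∑ k ∈ Q, s k := by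
        intro p _
        exact Finset.sum_le_sum_of_subset_of_nonneg (Finset.filter_subset _ _)
          (fun k _ _ => (hs k).le)
      unfold greedySol
      rw [if_pos hj, min_eq_right ((hsub _).trans hcase),
        min_eq_right ((hsub _).trans hcase), sum_le_eq_add hj]
      rw [add_sub_cancel_right, div_self (hs j).ne']
    calc ∑ j ∈ Q, v j * y j ≤ ∑ j ∈ Q, v j * 1 :=
          Finset.sum_le_sum (fun j hj => mul_le_mul_of_nonneg_left (hy1 j hj) (hv j).le)
      _ = ∑ j ∈ Q, v j * greedySol n C s Q j := by
          exact Finset.sum_congr rfl (fun j hj => by rw [hone j hj])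
  · -- capacity binding
    have hQne : Q.Nonempty := by
      by_contra h
      rw [Finset.not_nonempty_iff_eq_empty] at h
      simp [h] at hcase; linarith
    set T := Q.filter (fun k => C ≤ ∑ j ∈ Q.filter (fun i => i ≤ k), s j) with hT
    have hTne : T.Nonempty := by
      refine ⟨Q.max' hQne, Finset.mem_filter.mpr ⟨Q.max'_mem hQne, ?_⟩⟩
      have : Q.filter (fun i => i ≤ Q.max' hQne) = Q :=
        Finset.filter_true_of_mem (fun x hx => Q.le_max' x hx)
      rw [this]; exact hcase.le
    set c := T.min' hTne with hc
    have hcT : c ∈ T := T.min'_mem hTne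
    have hcQ : c ∈ Q := (Finset.mem_filter.mp hcT).1
    have hcC : C ≤ ∑ j ∈ Q.filter (fun i => i ≤ c), s j := (Finset.mem_filter.mp hcT).2
    have hlt : ∀ k ∈ Q, k < c → ∑ j ∈ Q.filter (fun i => i ≤ k), s j < C := by
      intro k hk hkc
      by_contra h
      push_neg at h
      exact absurd (T.min'_le k (Finset.mem_filter.mpr ⟨hk, h⟩)) (not_le.mpr hkc)
    -- x̃ values
    have hx1 : ∀ j ∈ Q, j < c → greedySol n C s Q j = 1 := by
      intro j hj hjc
      have h1 : ∑ k ∈ Q.filter (fun i => i ≤ j), s k < C := hlt j hj hjc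
      have h2 : ∑ k ∈ Q.filter (fun i => i < j), s k ≤ ∑ k ∈ Q.filter (fun i => i ≤ j), s k := by
        rw [sum_le_eq_add hj]; linarith [hs j]
      unfold greedySol
      rw [if_pos hj, min_eq_right h1.le, min_eq_right (h2.trans h1.le), sum_le_eq_add hj,
        add_sub_cancel_right, div_self (hs j).ne']
    have hx0 : ∀ j ∈ Q, c < j → greedySol n C s Q j = 0 := by
      intro j hj hcj
      have hsub : Q.filter (fun i => i ≤ c) ⊆ Q.filter (fun i => i < j) := by
        intro x hx
        rw [Finset.mem_filter] at hx ⊢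
        exact ⟨hx.1, lt_of_le_of_lt hx.2 hcj⟩
      have h1 : C ≤ ∑ k ∈ Q.filter (fun i => i < j), s k :=
        hcC.trans (Finset.sum_le_sum_of_subset_of_nonneg hsub (fun k _ _ => (hs k).le))
      have h2 : C ≤ ∑ k ∈ Q.filter (fun i => i ≤ j), s k := by
        refine h1.trans (Finset.sum_le_sum_of_subset_of_nonneg ?_ (fun k _ _ => (hs k).le))
        intro x hx; rw [Finset.mem_filter] at hx ⊢; exact ⟨hx.1, hx.2.le⟩
      unfold greedySol
      rw [if_pos hj, min_eq_left h1, min_eq_left h2, sub_self, zero_div]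
    set ρ := v c / s c with hρ
    have hρ0 : 0 ≤ ρ := div_nonneg (hv c).le (hs c).le
    have key : ∀ j ∈ Q, ρ * (s j * (greedySol n C s Q j - y j))
        ≤ v j * (greedySol n C s Q j - y j) := by
      intro j hj
      have hgen : ∀ (a b z : ℝ), b ≠ 0 → (a / b) * (b * z) = a * z := by
        intro a b z hb; field_simp
      rcases lt_trichotomy j c with hjc | rfl | hjc
      · rw [hx1 j hj hjc]
        have hd' : ρ ≤ v j / s j := (hd j c hjc).le
        have hy' : 0 ≤ 1 - y j := by linarith [hy1 j hj]
        have : ρ * (s j * (1 - y j)) ≤ (v j / s j) * (s j * (1 - y j)) :=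
          mul_le_mul_of_nonneg_right hd' (mul_nonneg (hs j).le hy')
        calc ρ * (s j * (1 - y j)) ≤ (v j / s j) * (s j * (1 - y j)) := this
          _ = v j * (1 - y j) := hgen _ _ _ (hs j).ne'
      · exact le_of_eq (hgen _ _ _ (hs c).ne')
      · rw [hx0 j hj hjc]
        have hd' : v j / s j ≤ ρ := (hd c j hjc).le
        have hy' : 0 ≤ y j := hy0 j hj
        have h1 : v j * y j ≤ ρ * (s j * y j) := by
          have : (v j / s j) * (s j * y j) ≤ ρ * (s j * y j) :=
            mul_le_mul_of_nonneg_right hd' (mul_nonneg (hs j).le hy')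
          calc v j * y j = (v j / s j) * (s j * y j) := (hgen _ _ _ (hs j).ne').symm
            _ ≤ ρ * (s j * y j) := this
        nlinarith
    have hsum : ρ * ∑ j ∈ Q, s j * (greedySol n C s Q j - y j)
        ≤ ∑ j ∈ Q, v j * (greedySol n C s Q j - y j) := by
      rw [Finset.mul_sum]
      exact Finset.sum_le_sum key
    have hcap : ∑ j ∈ Q, s j * (greedySol n C s Q j - y j) = C - ∑ j ∈ Q, s j * y j := by
      have : ∑ j ∈ Q, s j * (greedySol n C s Q j - y j)
          = ∑ j ∈ Q, s j * greedySol n C s Q j - ∑ j ∈ Q, s j * y j := by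
        rw [← Finset.sum_sub_distrib]; exact Finset.sum_congr rfl (fun j _ => by ring)
      rw [this, sum_s_greedy hC hs, min_eq_left hcase.le]
    have hnn : 0 ≤ ρ * ∑ j ∈ Q, s j * (greedySol n C s Q j - y j) := by
      rw [hcap]
      exact mul_nonneg hρ0 (by linarith)
    have : 0 ≤ ∑ j ∈ Q, v j * (greedySol n C s Q j - y j) := le_trans hnn hsum
    have hsplit : ∑ j ∈ Q, v j * (greedySol n C s Q j - y j)
        = ∑ j ∈ Q, v j * greedySol n C s Q j - ∑ j ∈ Q, v j * y j := by
      rw [← Finset.sum_sub_distrib]; exact Finset.sum_congr rfl (fun j _ => by ring)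
    linarith [hsplit ▸ this]

lemma greedy_insert_bound (hC : 0 < C) (hs : ∀ j, 0 < s j)
    {Q : Finset (Fin n)} {a : Fin n} (ha : a ∉ Q) :
    ∑ k ∈ Q, s k * (greedySol n C s Q k - greedySol n C s (insert a Q) k)
      ≤ s a * greedySol n C s (insert a Q) a := by
  have h1 : ∑ k ∈ insert a Q, s k * greedySol n C s (insert a Q) k
      = min C (∑ k ∈ insert a Q, s k) := sum_s_greedy hC hs _
  rw [Finset.sum_insert ha] at h1
  have h2 : ∑ k ∈ Q, s k * greedySol n C s Q k = min C (∑ k ∈ Q, s k) := sum_s_greedy hC hs _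
  have h3 : min C (∑ k ∈ Q, s k) ≤ min C (∑ k ∈ insert a Q, s k) := by
    apply min_le_min le_rfl
    rw [Finset.sum_insert ha]
    linarith [hs a]
  have h4 : ∑ k ∈ Q, s k * (greedySol n C s Q k - greedySol n C s (insert a Q) k)
      = ∑ k ∈ Q, s k * greedySol n C s Q k
        - ∑ k ∈ Q, s k * greedySol n C s (insert a Q) k := by
    rw [← Finset.sum_sub_distrib]; exact Finset.sum_congr rfl (fun j _ => by ring)
  linarith

lemma mem_Qset {π : Equiv.Perm (Fin n)} {m : ℕ} {j : Fin n} :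
    j ∈ Qset n π m ↔ (π.symm j : ℕ) < m := by
  simp only [Qset, Finset.mem_image, Finset.mem_filter, Finset.mem_univ, true_and]
  constructor
  · rintro ⟨k, hk, rfl⟩; simpa using hk
  · intro h; exact ⟨π.symm j, h, π.apply_symm_apply j⟩

lemma apply_mem_Qset {π : Equiv.Perm (Fin n)} {m : ℕ} {k : Fin n} :
    π k ∈ Qset n π m ↔ (k : ℕ) < m := by
  rw [mem_Qset, Equiv.symm_apply_apply]

lemma Qset_succ (π : Equiv.Perm (Fin n)) (k : Fin n) :
    Qset n π ((k : ℕ) + 1) = insert (π k) (Qset n π (k : ℕ)) := by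
  ext j
  rw [mem_Qset, Finset.mem_insert, mem_Qset]
  constructor
  · intro h
    rcases Nat.lt_succ_iff_lt_or_eq.mp h with h | h
    · exact Or.inr h
    · left
      have : π.symm j = k := Fin.ext h
      rw [← this, π.apply_symm_apply]
  · rintro (rfl | h)
    · rw [Equiv.symm_apply_apply]; exact Nat.lt_succ_self _
    · exact h.trans (Nat.lt_succ_self _)

lemma swap_image_filter (p q : Fin n) (m : ℕ) (hp : (p : ℕ) < m) (hq : (q : ℕ) < m) :
    (Finset.univ.filter (fun k : Fin n => (k : ℕ) < m)).image (Equiv.swap p q)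
      = Finset.univ.filter (fun k : Fin n => (k : ℕ) < m) := by
  apply Finset.Subset.antisymm
  · intro x hx
    rcases Finset.mem_image.mp hx with ⟨k, hk, rfl⟩
    rw [Finset.mem_filter] at hk ⊢
    refine ⟨Finset.mem_univ _, ?_⟩
    by_cases h1 : k = p
    · subst h1; rw [Equiv.swap_apply_left]; exact hq
    by_cases h2 : k = q
    · subst h2; rw [Equiv.swap_apply_right]; exact hp
    · rw [Equiv.swap_apply_of_ne_of_ne h1 h2]; exact hk.2
  · intro x hx
    apply Finset.mem_image.mpr
    refine ⟨Equiv.swap p q x, ?_, Equiv.swap_apply_self p q x⟩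
    rw [Finset.mem_filter] at hx ⊢
    refine ⟨Finset.mem_univ _, ?_⟩
    by_cases h1 : x = p
    · subst h1; rw [Equiv.swap_apply_left]; exact hq
    by_cases h2 : x = q
    · subst h2; rw [Equiv.swap_apply_right]; exact hp
    · rw [Equiv.swap_apply_of_ne_of_ne h1 h2]; exact hx.2

lemma Qset_mul_swap (π : Equiv.Perm (Fin n)) (p q : Fin n) (m : ℕ)
    (hp : (p : ℕ) < m) (hq : (q : ℕ) < m) :
    Qset n (π * Equiv.swap p q) m = Qset n π m := by
  unfold Qset
  conv_lhs => rw [Equiv.Perm.coe_mul]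
  rw [← Finset.image_image, swap_image_filter p q m hp hq]

lemma sum_perm_mul (F : Equiv.Perm (Fin n) → ℝ) (σ : Equiv.Perm (Fin n)) :
    ∑ π : Equiv.Perm (Fin n), F (π * σ) = ∑ π : Equiv.Perm (Fin n), F π :=
  Equiv.sum_comp (Equiv.mulRight σ) F

lemma card_filter_lt (m : ℕ) (hm : m ≤ n) :
    (Finset.univ.filter (fun k : Fin n => (k : ℕ) < m)).card = m := by
  have h : ∀ x ∈ Finset.range m, x < n := fun x hx => lt_of_lt_of_le (Finset.mem_range.mp hx) hm
  have : Finset.univ.filter (fun k : Fin n => (k : ℕ) < m) = (Finset.range m).attachFin h := by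
    ext j
    rw [Finset.mem_filter, Finset.mem_attachFin, Finset.mem_range]
    simp
  rw [this, Finset.card_attachFin, Finset.card_range]

lemma key_count (m : ℕ) (hm0 : 0 < m) (hmn : m ≤ n)
    (G : Equiv.Perm (Fin n) → Fin n → ℝ)
    (hswap : ∀ (π : Equiv.Perm (Fin n)) (p q : Fin n), (p : ℕ) < m → (q : ℕ) < m →
      G (π * Equiv.swap p q) q = G π p)
    (A : Finset (Fin n)) (hA : ∀ k ∈ A, (k : ℕ) < m) :
    (m : ℝ) * (∑ π : Equiv.Perm (Fin n), ∑ k ∈ A, G π k)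
      = (A.card : ℝ) * ∑ π : Equiv.Perm (Fin n),
          ∑ k ∈ Finset.univ.filter (fun k : Fin n => (k : ℕ) < m), G π k := by
  have hc : ∀ p q : Fin n, (p : ℕ) < m → (q : ℕ) < m →
      (∑ π : Equiv.Perm (Fin n), G π p) = ∑ π : Equiv.Perm (Fin n), G π q := by
    intro p q hp hq
    have h1 := sum_perm_mul (fun π => G π q) (Equiv.swap p q)
    rw [← h1]
    exact Finset.sum_congr rfl (fun π _ => (hswap π p q hp hq).symm)
  have hn0 : 0 < n := lt_of_lt_of_le hm0 hmn
  set k₀ : Fin n := ⟨0, hn0⟩ with hk₀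
  have hk₀m : (k₀ : ℕ) < m := hm0
  have hA' : ∀ k ∈ A, (∑ π : Equiv.Perm (Fin n), G π k) = ∑ π : Equiv.Perm (Fin n), G π k₀ :=
    fun k hk => hc k k₀ (hA k hk) hk₀m
  have hB' : ∀ k ∈ Finset.univ.filter (fun k : Fin n => (k : ℕ) < m),
      (∑ π : Equiv.Perm (Fin n), G π k) = ∑ π : Equiv.Perm (Fin n), G π k₀ :=
    fun k hk => hc k k₀ (Finset.mem_filter.mp hk).2 hk₀m
  rw [Finset.sum_comm, Finset.sum_comm (s := Finset.univ)]
  rw [Finset.sum_congr rfl hA', Finset.sum_congr rfl hB',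
    Finset.sum_const, Finset.sum_const, card_filter_lt m hmn,
    nsmul_eq_mul, nsmul_eq_mul]
  ring


noncomputable def Wterm (n : ℕ) (C : ℝ) (v s : Fin n → ℝ) (π : Equiv.Perm (Fin n)) (t : ℕ)
    (k : Fin n) : ℝ :=
  v (π k) * greedySol n C s (Qset n π ((k : ℕ) + 1)) (π k)
    - v (π k) * ((∑ k' ∈ Finset.univ.filter
          (fun k' : Fin n => t ≤ (k' : ℕ) ∧ (k' : ℕ) < (k : ℕ)),
        s (π k') * (greedySol n C s (Qset n π (k : ℕ)) (π k')
          - greedySol n C s (Qset n π ((k : ℕ) + 1)) (π k'))) / s (π k))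

lemma card_filter_Ico (t ℓ : ℕ) (hℓ : ℓ ≤ n) :
    (Finset.univ.filter (fun k' : Fin n => t ≤ (k' : ℕ) ∧ (k' : ℕ) < ℓ)).card = ℓ - t := by
  have h : ∀ x ∈ Finset.Ico t ℓ, x < n := fun x hx =>
    lt_of_lt_of_le (Finset.mem_Ico.mp hx).2 hℓ
  have : Finset.univ.filter (fun k' : Fin n => t ≤ (k' : ℕ) ∧ (k' : ℕ) < ℓ)
      = (Finset.Ico t ℓ).attachFin h := by
    ext j
    rw [Finset.mem_filter, Finset.mem_attachFin, Finset.mem_Ico]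
    simp
  rw [this, Finset.card_attachFin, Nat.card_Ico]

lemma round_bound (n : ℕ) (C : ℝ) (hC : 0 < C) (v s : Fin n → ℝ)
    (hv : ∀ j, 0 < v j) (hs0 : ∀ j, 0 < s j) (hsC : ∀ j, s j ≤ C)
    (hd : ∀ j k : Fin n, j < k → v k / s k < v j / s j)
    (t : ℕ) (ht1 : 1 ≤ t) (k : Fin n) (htk : t ≤ (k : ℕ)) :
    ((t : ℝ) / ((k : ℕ) : ℝ)) * ((n.factorial : ℝ)
        * (∑ j, v j * greedySol n C s Finset.univ j) / n)
      ≤ ∑ π : Equiv.Perm (Fin n), Wterm n C v s π t k := by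
  set ℓ : ℕ := (k : ℕ) with hℓdef
  have hℓn : ℓ < n := k.isLt
  have hℓ0 : 0 < ℓ := lt_of_lt_of_le ht1 htk
  have hn0 : 0 < n := lt_trans hℓ0 hℓn
  set Vstar : ℝ := ∑ j, v j * greedySol n C s Finset.univ j with hVdef
  have hV0 : 0 ≤ Vstar := Finset.sum_nonneg
    (fun j _ => mul_nonneg (hv j).le (greedy_nonneg hC hs0 _ _))
  have hgen : ∀ (a b z : ℝ), b ≠ 0 → (a / b) * (b * z) = a * z := by
    intro a b z hb; field_simp
  -- the three G functions
  set G1 : Equiv.Perm (Fin n) → Fin n → ℝ :=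
    fun π k' => v (π k') * greedySol n C s (Qset n π (ℓ + 1)) (π k') with hG1
  set G2 : Equiv.Perm (Fin n) → Fin n → ℝ :=
    fun π k' => (v (π k) / s (π k)) * (s (π k')
      * (greedySol n C s (Qset n π ℓ) (π k')
        - greedySol n C s (Qset n π (ℓ + 1)) (π k'))) with hG2
  set G0 : Equiv.Perm (Fin n) → Fin n → ℝ :=
    fun π k' => v (π k') * greedySol n C s Finset.univ (π k') with hG0
  set B : Finset (Fin n) := Finset.univ.filter (fun k' : Fin n => (k' : ℕ) < ℓ) with hB
  set B' : Finset (Fin n) := Finset.univ.filter (fun k' : Fin n => (k' : ℕ) < ℓ + 1) with hB'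
  set A : Finset (Fin n) :=
    Finset.univ.filter (fun k' : Fin n => t ≤ (k' : ℕ) ∧ (k' : ℕ) < ℓ) with hA
  set T1 : ℝ := ∑ π : Equiv.Perm (Fin n), G1 π k with hT1
  -- (3) key_count for G2
  have hcount2 : (ℓ : ℝ) * (∑ π : Equiv.Perm (Fin n), ∑ k' ∈ A, G2 π k')
      = ((ℓ - t : ℕ) : ℝ) * ∑ π : Equiv.Perm (Fin n), ∑ k' ∈ B, G2 π k' := by
    rw [← card_filter_Ico t ℓ hℓn.le]
    apply key_count ℓ hℓ0 hℓn.le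
    · intro π p q hp hq
      have hkp : k ≠ p := Fin.ne_of_val_ne (by omega)
      have hkq : k ≠ q := Fin.ne_of_val_ne (by omega)
      simp only [hG2, Equiv.Perm.mul_apply, Equiv.swap_apply_right,
        Equiv.swap_apply_of_ne_of_ne hkp hkq,
        Qset_mul_swap π p q ℓ hp hq,
        Qset_mul_swap π p q (ℓ + 1) (hp.trans (Nat.lt_succ_self ℓ))
          (hq.trans (Nat.lt_succ_self ℓ))]
    · intro k' hk'
      exact (Finset.mem_filter.mp hk').2.2
  -- (4) per π bound of full G2-sum by T1-term
  have hfull2 : ∑ π : Equiv.Perm (Fin n), ∑ k' ∈ B, G2 π k' ≤ T1 := by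
    apply Finset.sum_le_sum
    intro π _
    have hinner : ∑ k' ∈ B, s (π k')
        * (greedySol n C s (Qset n π ℓ) (π k')
          - greedySol n C s (Qset n π (ℓ + 1)) (π k'))
        = ∑ j ∈ Qset n π ℓ, s j * (greedySol n C s (Qset n π ℓ) j
            - greedySol n C s (Qset n π (ℓ + 1)) j) := by
      rw [Qset, ← hB, Finset.sum_image (fun a _ b _ h => π.injective h)]
    have hnotmem : π k ∉ Qset n π ℓ := by
      rw [apply_mem_Qset]; omega
    have hins : insert (π k) (Qset n π ℓ) = Qset n π (ℓ + 1) := (Qset_succ π k).symm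
    have hbound := greedy_insert_bound hC hs0 hnotmem
    rw [hins] at hbound
    have hds : 0 ≤ v (π k) / s (π k) := div_nonneg (hv _).le (hs0 _).le
    have : ∑ k' ∈ B, G2 π k'
        = (v (π k) / s (π k)) * ∑ j ∈ Qset n π ℓ,
            s j * (greedySol n C s (Qset n π ℓ) j - greedySol n C s (Qset n π (ℓ + 1)) j) := by
      rw [hG2, ← hinner, Finset.mul_sum]
    rw [this]
    calc (v (π k) / s (π k)) * ∑ j ∈ Qset n π ℓ,
          s j * (greedySol n C s (Qset n π ℓ) j - greedySol n C s (Qset n π (ℓ + 1)) j)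
        ≤ (v (π k) / s (π k)) * (s (π k) * greedySol n C s (Qset n π (ℓ + 1)) (π k)) :=
          mul_le_mul_of_nonneg_left hbound hds
      _ = G1 π k := hgen _ _ _ (hs0 _).ne'
  -- (5) key_count for G1 with singleton {k}
  have hcount1 : ((ℓ + 1 : ℕ) : ℝ) * T1
      = ∑ π : Equiv.Perm (Fin n), ∑ k' ∈ B', G1 π k' := by
    have h := key_count (n := n) (ℓ + 1) (Nat.succ_pos ℓ) hℓn
      G1 ?_ {k} ?_
    · have hsum : ∑ π : Equiv.Perm (Fin n), ∑ k' ∈ ({k} : Finset (Fin n)), G1 π k' = T1 :=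
        Finset.sum_congr rfl (fun π _ => Finset.sum_singleton _ _)
      rw [hsum, Finset.card_singleton, Nat.cast_one, one_mul] at h
      exact h
    · intro π p q hp hq
      simp only [hG1, Equiv.Perm.mul_apply, Equiv.swap_apply_right,
        Qset_mul_swap π p q (ℓ + 1) hp hq]
    · intro k' hk'
      rw [Finset.mem_singleton] at hk'
      subst hk'
      exact Nat.lt_succ_self ℓ
  -- (6) greedy optimality per π
  have hopt : ∀ π : Equiv.Perm (Fin n), ∑ k' ∈ B', G0 π k' ≤ ∑ k' ∈ B', G1 π k' := by
    intro π
    have himg : ∀ (F : Fin n → ℝ), ∑ k' ∈ B', F (π k') = ∑ j ∈ Qset n π (ℓ + 1), F j := by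
      intro F
      rw [Qset, ← hB', Finset.sum_image (fun a _ b _ h => π.injective h)]
    have e0 : ∑ k' ∈ B', G0 π k'
        = ∑ j ∈ Qset n π (ℓ + 1), v j * greedySol n C s Finset.univ j :=
      himg (fun j => v j * greedySol n C s Finset.univ j)
    have e1 : ∑ k' ∈ B', G1 π k'
        = ∑ j ∈ Qset n π (ℓ + 1), v j * greedySol n C s (Qset n π (ℓ + 1)) j :=
      himg (fun j => v j * greedySol n C s (Qset n π (ℓ + 1)) j)
    rw [e0, e1]
    apply greedy_opt hC hs0 hv hd
    · intro j _; exact greedy_nonneg hC hs0 _ _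
    · intro j _; exact greedy_le_one hC hs0 _ _
    · calc ∑ j ∈ Qset n π (ℓ + 1), s j * greedySol n C s Finset.univ j
          ≤ ∑ j, s j * greedySol n C s Finset.univ j :=
            Finset.sum_le_sum_of_subset_of_nonneg (Finset.subset_univ _)
              (fun j _ _ => mul_nonneg (hs0 j).le (greedy_nonneg hC hs0 _ _))
        _ = min C (∑ j, s j) := sum_s_greedy hC hs0 _
        _ ≤ C := min_le_left _ _
  -- (7) key_count for G0
  have hcount0 : (n : ℝ) * (∑ π : Equiv.Perm (Fin n), ∑ k' ∈ B', G0 π k')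
      = ((ℓ + 1 : ℕ) : ℝ) * ((n.factorial : ℝ) * Vstar) := by
    have huniv : Finset.univ.filter (fun k' : Fin n => (k' : ℕ) < n) = Finset.univ := by
      apply Finset.filter_true_of_mem
      intro x _
      exact x.isLt
    have h := key_count (n := n) n hn0 le_rfl G0 ?_ B' ?_
    · rw [h, huniv]
      have hinner : ∀ π : Equiv.Perm (Fin n), ∑ k' : Fin n, G0 π k' = Vstar := by
        intro π
        exact Equiv.sum_comp π (fun j => v j * greedySol n C s Finset.univ j)
      rw [Finset.sum_congr rfl (fun π _ => hinner π), Finset.sum_const,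
        Finset.card_univ, Fintype.card_perm, Fintype.card_fin, nsmul_eq_mul]
      have hcard : B'.card = ℓ + 1 := card_filter_lt (ℓ + 1) hℓn
      rw [hcard]
    · intro π p q hp hq
      simp only [hG0, Equiv.Perm.mul_apply, Equiv.swap_apply_right]
    · intro k' _
      exact k'.isLt
  -- combine
  have hfact0 : (0 : ℝ) < (n.factorial : ℝ) := by
    exact_mod_cast Nat.factorial_pos n
  have hℓR : (0 : ℝ) < (ℓ : ℝ) := by exact_mod_cast hℓ0
  have hℓ1R : (0 : ℝ) < ((ℓ + 1 : ℕ) : ℝ) := by positivity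
  have hnR : (0 : ℝ) < (n : ℝ) := by exact_mod_cast hn0
  have hT1lb : (n.factorial : ℝ) * Vstar / n ≤ T1 := by
    have h6 : ∑ π : Equiv.Perm (Fin n), ∑ k' ∈ B', G0 π k'
        ≤ ∑ π : Equiv.Perm (Fin n), ∑ k' ∈ B', G1 π k' :=
      Finset.sum_le_sum (fun π _ => hopt π)
    have : ((ℓ + 1 : ℕ) : ℝ) * ((n.factorial : ℝ) * Vstar) / n ≤ ((ℓ + 1 : ℕ) : ℝ) * T1 := by
      rw [← hcount0, hcount1]
      calc (n : ℝ) * (∑ π : Equiv.Perm (Fin n), ∑ k' ∈ B', G0 π k') / n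
          = ∑ π : Equiv.Perm (Fin n), ∑ k' ∈ B', G0 π k' := by
            field_simp
        _ ≤ ∑ π : Equiv.Perm (Fin n), ∑ k' ∈ B', G1 π k' := h6
    rw [div_le_iff₀ hnR] at this ⊢
    nlinarith
  have hT10 : 0 ≤ T1 := le_trans (by positivity) hT1lb
  have hsub_le : ∑ π : Equiv.Perm (Fin n), ∑ k' ∈ A, G2 π k'
      ≤ (((ℓ : ℝ) - t) / ℓ) * T1 := by
    have hlt : ((ℓ - t : ℕ) : ℝ) = (ℓ : ℝ) - t := by
      rw [Nat.cast_sub htk]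
    have h1 : (ℓ : ℝ) * (∑ π : Equiv.Perm (Fin n), ∑ k' ∈ A, G2 π k')
        ≤ ((ℓ : ℝ) - t) * T1 := by
      rw [hcount2, hlt]
      apply mul_le_mul_of_nonneg_left hfull2
      have : (t : ℝ) ≤ (ℓ : ℝ) := by exact_mod_cast htk
      linarith
    rw [div_mul_eq_mul_div, le_div_iff₀ hℓR]
    linarith
  -- express ∑ Wterm as T1 - ∑∑ G2
  have hW : ∑ π : Equiv.Perm (Fin n), Wterm n C v s π t k
      = T1 - ∑ π : Equiv.Perm (Fin n), ∑ k' ∈ A, G2 π k' := by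
    rw [hT1, ← Finset.sum_sub_distrib]
    apply Finset.sum_congr rfl
    intro π _
    show v (π k) * greedySol n C s (Qset n π (ℓ + 1)) (π k)
        - v (π k) * ((∑ k' ∈ A,
            s (π k') * (greedySol n C s (Qset n π ℓ) (π k')
              - greedySol n C s (Qset n π (ℓ + 1)) (π k'))) / s (π k))
      = v (π k) * greedySol n C s (Qset n π (ℓ + 1)) (π k)
        - ∑ k' ∈ A, (v (π k) / s (π k)) * (s (π k')
            * (greedySol n C s (Qset n π ℓ) (π k')
              - greedySol n C s (Qset n π (ℓ + 1)) (π k')))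
    congr 1
    rw [← Finset.mul_sum, div_mul_eq_mul_div, ← mul_div_assoc]
  rw [hW]
  have htℓ : (0 : ℝ) ≤ (t : ℝ) / (ℓ : ℝ) := by positivity
  have hstep : ((t : ℝ) / ℓ) * T1
      ≤ T1 - ∑ π : Equiv.Perm (Fin n), ∑ k' ∈ A, G2 π k' := by
    have : ((t : ℝ) / ℓ) * T1 = T1 - (((ℓ : ℝ) - t) / ℓ) * T1 := by
      field_simp
      ring
    rw [this]
    linarith
  calc ((t : ℝ) / (ℓ : ℝ)) * ((n.factorial : ℝ) * Vstar / n)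
      ≤ ((t : ℝ) / ℓ) * T1 := mul_le_mul_of_nonneg_left hT1lb htℓ
    _ ≤ _ := hstep

end FKaux

/-- Let `x` be the output of Algorithm `FractionalKnapsack` with
sample size `t ∈ {1,…,n−1}`, where the permutation `π` is uniformly random. Then
`E[v(x)] ≥ (t/n) · Σ_{ℓ=t+1}^n 1/(ℓ−1) · v(x̃([n])) ≥ (t/n)(ln n − ln t) · v(x̃([n]))`.
In particular, for `t = ⌊n/e⌋` (and `n ≥ 3`, so that `t ≥ 1`),
`E[v(x)] ≥ (⌊n/e⌋/n)(ln n − ln ⌊n/e⌋) · v(x̃([n]))`. -/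
theorem algFK_expected_value_bound
    (n : ℕ) (C : ℝ) (hC : 0 < C)
    (v s : Fin n → ℝ)
    (hv : ∀ j, 0 < v j) (hs : ∀ j, 0 < s j ∧ s j ≤ C)
    (hd : ∀ j k : Fin n, j < k → v k / s k < v j / s j)
    (t : ℕ) (ht1 : 1 ≤ t) (ht2 : t < n) :
    ((∑ π : Equiv.Perm (Fin n), ∑ j, v j * algFK n C s π t j) / (n.factorial : ℝ)
        ≥ ((t : ℝ) / n) * (∑ ℓ ∈ Finset.Icc (t + 1) n, 1 / ((ℓ : ℝ) - 1))
            * (∑ j, v j * greedySol n C s Finset.univ j)) ∧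
    (((t : ℝ) / n) * (∑ ℓ ∈ Finset.Icc (t + 1) n, 1 / ((ℓ : ℝ) - 1))
            * (∑ j, v j * greedySol n C s Finset.univ j)
        ≥ ((t : ℝ) / n) * (Real.log n - Real.log t)
            * (∑ j, v j * greedySol n C s Finset.univ j)) ∧
    (t = ⌊(n : ℝ) / Real.exp 1⌋₊ → 3 ≤ n →
      (∑ π : Equiv.Perm (Fin n), ∑ j, v j * algFK n C s π t j) / (n.factorial : ℝ)
        ≥ ((t : ℝ) / n) * (Real.log n - Real.log t)
            * (∑ j, v j * greedySol n C s Finset.univ j)) := by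
  have hs0 : ∀ j, 0 < s j := fun j => (hs j).1
  set Vstar : ℝ := ∑ j, v j * greedySol n C s Finset.univ j with hV
  have hV0 : 0 ≤ Vstar := Finset.sum_nonneg
    (fun j _ => mul_nonneg (hv j).le (FKaux.greedy_nonneg hC hs0 _ _))
  have hfact0 : (0 : ℝ) < (n.factorial : ℝ) := by exact_mod_cast Nat.factorial_pos n
  have hn0 : 0 < n := lt_of_le_of_lt (Nat.zero_le t) ht2
  have hnR : (0 : ℝ) < (n : ℝ) := by exact_mod_cast hn0
  set D : Finset (Fin n) := Finset.univ.filter (fun k : Fin n => t ≤ (k : ℕ)) with hD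
  -- rewrite the expected value as a sum over rounds
  have hE : ∑ π : Equiv.Perm (Fin n), ∑ j, v j * algFK n C s π t j
      = ∑ k ∈ D, ∑ π : Equiv.Perm (Fin n), FKaux.Wterm n C v s π t k := by
    have hper : ∀ π : Equiv.Perm (Fin n), ∑ j, v j * algFK n C s π t j
        = ∑ k ∈ D, FKaux.Wterm n C v s π t k := by
      intro π
      have h1 : ∑ j, v j * algFK n C s π t j
          = ∑ k : Fin n, v (π k) * algFK n C s π t (π k) :=
        (Equiv.sum_comp π (fun j => v j * algFK n C s π t j)).symm
      rw [h1, hD, Finset.sum_filter]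
      apply Finset.sum_congr rfl
      intro k _
      unfold algFK FKaux.Wterm
      simp only [Equiv.symm_apply_apply]
      by_cases hk : (k : ℕ) < t
      · rw [if_pos hk, if_neg (not_le.mpr hk), mul_zero]
      · rw [if_neg hk, if_pos (not_lt.mp hk)]
        ring
    rw [Finset.sum_congr rfl (fun π _ => hper π), Finset.sum_comm]
  -- per-round lower bound
  have hround : ∀ k ∈ D, ((t : ℝ) / ((k : ℕ) : ℝ)) * ((n.factorial : ℝ) * Vstar / n)
      ≤ ∑ π : Equiv.Perm (Fin n), FKaux.Wterm n C v s π t k := by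
    intro k hk
    exact FKaux.round_bound n C hC v s hv hs0 (fun j => (hs j).2) hd t ht1 k
      (Finset.mem_filter.mp hk).2
  have hEineq : ∑ k ∈ D, ((t : ℝ) / ((k : ℕ) : ℝ)) * ((n.factorial : ℝ) * Vstar / n)
      ≤ ∑ π : Equiv.Perm (Fin n), ∑ j, v j * algFK n C s π t j := by
    rw [hE]
    exact Finset.sum_le_sum hround
  -- reindex the round-sum over ℕ
  have himgD : D.image (fun k : Fin n => (k : ℕ)) = Finset.Ico t n := by
    ext m
    simp only [Finset.mem_image, Finset.mem_Ico, hD, Finset.mem_filter, Finset.mem_univ, true_and]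
    constructor
    · rintro ⟨k, hk, rfl⟩; exact ⟨hk, k.isLt⟩
    · rintro ⟨h1, h2⟩; exact ⟨⟨m, h2⟩, h1, rfl⟩
  have hsumD : ∑ k ∈ D, ((t : ℝ) / ((k : ℕ) : ℝ)) * ((n.factorial : ℝ) * Vstar / n)
      = ∑ m ∈ Finset.Ico t n, ((t : ℝ) / (m : ℝ)) * ((n.factorial : ℝ) * Vstar / n) := by
    rw [← himgD, Finset.sum_image (fun a _ b _ h => Fin.val_injective h)]
  have hIco : ∑ ℓ ∈ Finset.Icc (t + 1) n, 1 / ((ℓ : ℝ) - 1)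
      = ∑ m ∈ Finset.Ico t n, 1 / (m : ℝ) := by
    have himg : (Finset.Ico t n).image (fun m => m + 1) = Finset.Icc (t + 1) n := by
      ext m
      simp only [Finset.mem_image, Finset.mem_Ico, Finset.mem_Icc]
      constructor
      · rintro ⟨a, ha, rfl⟩; omega
      · intro h; exact ⟨m - 1, by omega, by omega⟩
    rw [← himg, Finset.sum_image (fun a _ b _ h => by omega)]
    apply Finset.sum_congr rfl
    intro m _
    have : ((m + 1 : ℕ) : ℝ) - 1 = (m : ℝ) := by push_cast; ring
    rw [this]
  -- goal 1
  have goal1 : (∑ π : Equiv.Perm (Fin n), ∑ j, v j * algFK n C s π t j) / (n.factorial : ℝ)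
      ≥ ((t : ℝ) / n) * (∑ ℓ ∈ Finset.Icc (t + 1) n, 1 / ((ℓ : ℝ) - 1)) * Vstar := by
    rw [ge_iff_le, le_div_iff₀ hfact0]
    calc ((t : ℝ) / n) * (∑ ℓ ∈ Finset.Icc (t + 1) n, 1 / ((ℓ : ℝ) - 1)) * Vstar
          * (n.factorial : ℝ)
        = ∑ m ∈ Finset.Ico t n, ((t : ℝ) / (m : ℝ)) * ((n.factorial : ℝ) * Vstar / n) := by
          rw [hIco]
          calc ((t : ℝ) / n) * (∑ m ∈ Finset.Ico t n, 1 / (m : ℝ)) * Vstar * (n.factorial : ℝ)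
              = ((t : ℝ) / n * Vstar * (n.factorial : ℝ)) * ∑ m ∈ Finset.Ico t n, 1 / (m : ℝ) := by
                ring
            _ = ∑ m ∈ Finset.Ico t n,
                  ((t : ℝ) / n * Vstar * (n.factorial : ℝ)) * (1 / (m : ℝ)) :=
                Finset.mul_sum _ _ _
            _ = ∑ m ∈ Finset.Ico t n, ((t : ℝ) / (m : ℝ)) * ((n.factorial : ℝ) * Vstar / n) := by
                apply Finset.sum_congr rfl
                intro m _
                ring
      _ = ∑ k ∈ D, ((t : ℝ) / ((k : ℕ) : ℝ)) * ((n.factorial : ℝ) * Vstar / n) := hsumD.symm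
      _ ≤ _ := hEineq
  -- goal 2
  have hlog : Real.log n - Real.log t ≤ ∑ ℓ ∈ Finset.Icc (t + 1) n, 1 / ((ℓ : ℝ) - 1) := by
    rw [hIco]
    have htel : ∑ m ∈ Finset.Ico t n,
        (Real.log ((m + 1 : ℕ) : ℝ) - Real.log (m : ℝ)) = Real.log n - Real.log t := by
      rw [Finset.sum_Ico_eq_sub _ ht2.le,
        Finset.sum_range_sub (fun i : ℕ => Real.log (i : ℝ)),
        Finset.sum_range_sub (fun i : ℕ => Real.log (i : ℝ))]
      ring
    rw [← htel]
    apply Finset.sum_le_sum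
    intro m hm
    have hm1 : 1 ≤ m := le_trans ht1 (Finset.mem_Ico.mp hm).1
    have hmR : (0 : ℝ) < (m : ℝ) := by exact_mod_cast hm1
    have hx : (0 : ℝ) < ((m + 1 : ℕ) : ℝ) / (m : ℝ) := by positivity
    have hlog1 := Real.log_le_sub_one_of_pos hx
    rw [Real.log_div (by positivity) hmR.ne'] at hlog1
    have heq : ((m + 1 : ℕ) : ℝ) / (m : ℝ) - 1 = 1 / (m : ℝ) := by
      push_cast
      field_simp
      ring
    linarith
  have goal2 : ((t : ℝ) / n) * (∑ ℓ ∈ Finset.Icc (t + 1) n, 1 / ((ℓ : ℝ) - 1)) * Vstar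
      ≥ ((t : ℝ) / n) * (Real.log n - Real.log t) * Vstar := by
    apply mul_le_mul_of_nonneg_right _ hV0
    apply mul_le_mul_of_nonneg_left hlog (by positivity)
  exact ⟨goal1, goal2, fun _ _ => le_trans goal2 goal1⟩
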